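/- Let k > 0, d ∈ ℝ and (x, y) ∈ ℝ². Then the function F(R) = ∫_{−π/2}^0 (sin²θ/(1 + cos θ))·exp(−ik(d sin θ − x cos θ − y sin θ))·exp(ikR cos θ) dθ satisfies F(R) = O(R^{−1}) as R → ∞. -/

import Mathlib

open scoped Real

/-- Integration-by-parts estimate in the grazing case:
`F(R) = ∫_{-π/2}^0 (sin²θ/(1 + cos θ)) e^{-ik(d sin θ - x cos θ - y sin θ)} e^{ikR cos θ} dθ`
is `O(R⁻¹)` as `R → ∞`. -/
theorem stmt11 (k d x y : ℝ) (hk : 0 < k) :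
    (fun R : ℝ => ∫ θ in (-π / 2 : ℝ)..0,
        ((Real.sin θ ^ 2 / (1 + Real.cos θ) : ℝ) : ℂ) *
          Complex.exp (-Complex.I * (k : ℂ) *
            ((d * Real.sin θ - x * Real.cos θ - y * Real.sin θ : ℝ) : ℂ)) *
          Complex.exp (Complex.I * (k : ℂ) * (R : ℂ) * ((Real.cos θ : ℝ) : ℂ)))
      =O[Filter.atTop] fun R : ℝ => R⁻¹ := by
  have hpi : (0:ℝ) < π := Real.pi_pos
  set A : ℝ := |d| + |x| + |y| with hA
  set B : ℝ := 1 + (1 + k * A) * (π / 2) with hB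
  -- basic functions
  set φ : ℝ → ℝ := fun θ => d * Real.sin θ - x * Real.cos θ - y * Real.sin θ with hφdef
  set φ' : ℝ → ℝ := fun θ => d * Real.cos θ + x * Real.sin θ - y * Real.cos θ with hφ'def
  set q : ℝ → ℝ := fun θ => Real.sin θ / (1 + Real.cos θ) with hqdef
  set E : ℝ → ℂ := fun θ => Complex.exp (-Complex.I * (k:ℂ) * ((φ θ : ℝ) : ℂ)) with hEdef
  set g : ℝ → ℂ := fun θ => ((q θ : ℝ) : ℂ) * E θ with hgdef
  set g' : ℝ → ℂ := fun θ =>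
    (((1 + Real.cos θ)⁻¹ : ℝ) : ℂ) * E θ
      + ((q θ : ℝ) : ℂ) * (E θ * (-Complex.I * (k:ℂ) * ((φ' θ : ℝ) : ℂ))) with hg'def
  -- facts on the interval
  have hIcc : Set.uIcc (-π / 2 : ℝ) 0 = Set.Icc (-π / 2 : ℝ) 0 :=
    Set.uIcc_of_le (by linarith)
  have hcosnn : ∀ θ ∈ Set.uIcc (-π / 2 : ℝ) 0, 0 ≤ Real.cos θ := by
    intro θ hθ
    rw [hIcc] at hθ
    exact Real.cos_nonneg_of_mem_Icc ⟨by linarith [hθ.1], by linarith [hθ.2]⟩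
  have hone : ∀ θ : ℝ, 0 ≤ Real.cos θ → (1:ℝ) ≤ 1 + Real.cos θ := fun θ h => by linarith
  have hne : ∀ θ : ℝ, 0 ≤ Real.cos θ → (1:ℝ) + Real.cos θ ≠ 0 := fun θ h => by positivity
  -- derivatives
  have hφderiv : ∀ θ : ℝ, HasDerivAt φ (φ' θ) θ := by
    intro θ
    have h1 := ((Real.hasDerivAt_sin θ).const_mul d).sub ((Real.hasDerivAt_cos θ).const_mul x)
    have h2 := h1.sub ((Real.hasDerivAt_sin θ).const_mul y)
    exact h2.congr_deriv (by simp only [hφ'def]; ring)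
  have hEderiv : ∀ θ : ℝ, HasDerivAt E (E θ * (-Complex.I * (k:ℂ) * ((φ' θ : ℝ) : ℂ))) θ := by
    intro θ
    have h1 : HasDerivAt (fun t : ℝ => ((φ t : ℝ) : ℂ)) ((φ' θ : ℝ) : ℂ) θ :=
      (hφderiv θ).ofReal_comp
    have h2 := h1.const_mul (-Complex.I * (k:ℂ))
    exact h2.cexp
  have hqderiv : ∀ θ : ℝ, 0 ≤ Real.cos θ → HasDerivAt q ((1 + Real.cos θ)⁻¹) θ := by
    intro θ hθ
    have hb := hne θ hθ
    have h1 := (Real.hasDerivAt_sin θ).div ((hasDerivAt_const θ (1:ℝ)).add (Real.hasDerivAt_cos θ)) hb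
    refine h1.congr_deriv ?_
    have hs := Real.sin_sq_add_cos_sq θ
    show (Real.cos θ * (1 + Real.cos θ) - Real.sin θ * (0 + -Real.sin θ)) / (1 + Real.cos θ) ^ 2 = (1 + Real.cos θ)⁻¹
    rw [div_eq_iff (pow_ne_zero 2 hb), pow_two, ← mul_assoc, inv_mul_cancel₀ hb, one_mul]
    nlinarith [hs]
  have hgderiv : ∀ θ ∈ Set.uIcc (-π / 2 : ℝ) 0, HasDerivAt g (g' θ) θ := by
    intro θ hθ
    have h1 : HasDerivAt (fun t : ℝ => ((q t : ℝ) : ℂ)) (((1 + Real.cos θ)⁻¹ : ℝ) : ℂ) θ :=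
      (hqderiv θ (hcosnn θ hθ)).ofReal_comp
    exact h1.mul (hEderiv θ)
  -- bound data
  have hnormE : ∀ θ : ℝ, ‖E θ‖ = 1 := by
    intro θ
    rw [hEdef]
    simp [Complex.norm_exp]
  have habsq : ∀ θ : ℝ, 0 ≤ Real.cos θ → |q θ| ≤ 1 := by
    intro θ hθ
    rw [hqdef]
    rw [abs_div, abs_of_pos (by linarith : (0:ℝ) < 1 + Real.cos θ)]
    rw [div_le_one (by linarith)]
    have := Real.abs_sin_le_one θ
    linarith
  have habsφ' : ∀ θ : ℝ, |φ' θ| ≤ A := by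
    intro θ
    have h1 : |φ' θ| ≤ |d * Real.cos θ + x * Real.sin θ| + |y * Real.cos θ| := by
      rw [hφ'def]; exact abs_sub _ _
    have h2 : |d * Real.cos θ + x * Real.sin θ| ≤ |d * Real.cos θ| + |x * Real.sin θ| :=
      abs_add_le _ _
    have hc := Real.abs_cos_le_one θ
    have hs := Real.abs_sin_le_one θ
    have h3 : |d * Real.cos θ| ≤ |d| := by
      rw [abs_mul]; nlinarith [abs_nonneg d, abs_nonneg (Real.cos θ)]
    have h4 : |x * Real.sin θ| ≤ |x| := by
      rw [abs_mul]; nlinarith [abs_nonneg x, abs_nonneg (Real.sin θ)]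
    have h5 : |y * Real.cos θ| ≤ |y| := by
      rw [abs_mul]; nlinarith [abs_nonneg y, abs_nonneg (Real.cos θ)]
    rw [hA]; linarith
  have hg'bound : ∀ θ ∈ Set.uIcc (-π / 2 : ℝ) 0, ‖g' θ‖ ≤ 1 + k * A := by
    intro θ hθ
    have hc := hcosnn θ hθ
    have h1 : ‖(((1 + Real.cos θ)⁻¹ : ℝ) : ℂ) * E θ‖ ≤ 1 := by
      rw [norm_mul, hnormE, mul_one, Complex.norm_real, Real.norm_eq_abs,
        abs_of_pos (by positivity : (0:ℝ) < (1 + Real.cos θ)⁻¹)]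
      rw [inv_le_one_iff₀]
      right; linarith
    have h2 : ‖((q θ : ℝ) : ℂ) * (E θ * (-Complex.I * (k:ℂ) * ((φ' θ : ℝ) : ℂ)))‖ ≤ k * A := by
      simp only [norm_mul, norm_neg, Complex.norm_I, Complex.norm_real, Real.norm_eq_abs,
        hnormE, one_mul, mul_one, abs_of_pos hk]
      calc |q θ| * (k * |φ' θ|) ≤ 1 * (k * A) := by
            apply mul_le_mul (habsq θ hc) ?_ (by positivity) zero_le_one
            exact mul_le_mul_of_nonneg_left (habsφ' θ) hk.le
        _ = k * A := one_mul _
    calc ‖g' θ‖ ≤ ‖(((1 + Real.cos θ)⁻¹ : ℝ) : ℂ) * E θ‖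
          + ‖((q θ : ℝ) : ℂ) * (E θ * (-Complex.I * (k:ℂ) * ((φ' θ : ℝ) : ℂ)))‖ := norm_add_le _ _
      _ ≤ 1 + k * A := add_le_add h1 h2
  -- integrability
  have hcontφ' : Continuous φ' := by rw [hφ'def]; fun_prop
  have hcontE : Continuous E := by rw [hEdef]; fun_prop
  have hcontg' : ContinuousOn g' (Set.uIcc (-π / 2 : ℝ) 0) := by
    have hinv : ContinuousOn (fun θ : ℝ => (1 + Real.cos θ)⁻¹) (Set.uIcc (-π / 2 : ℝ) 0) :=
      ContinuousOn.inv₀ (by fun_prop) (fun θ hθ => hne θ (hcosnn θ hθ))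
    have hq : ContinuousOn q (Set.uIcc (-π / 2 : ℝ) 0) := by
      rw [hqdef]
      exact ContinuousOn.div (by fun_prop) (by fun_prop) (fun θ hθ => hne θ (hcosnn θ hθ))
    rw [hg'def]
    apply ContinuousOn.add
    · exact (Complex.continuous_ofReal.comp_continuousOn hinv).mul hcontE.continuousOn
    · exact (Complex.continuous_ofReal.comp_continuousOn hq).mul
        (hcontE.mul (by fun_prop)).continuousOn
  have hintg' : IntervalIntegrable g' MeasureTheory.volume (-π / 2 : ℝ) 0 :=
    hcontg'.intervalIntegrable
  -- the main estimate
  rw [Asymptotics.isBigO_iff]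
  refine ⟨B / k, ?_⟩
  filter_upwards [Filter.eventually_ge_atTop (1:ℝ)] with R hR1
  have hR0 : (0:ℝ) < R := by linarith
  -- functions depending on R
  set h : ℝ → ℂ := fun θ => Complex.exp (Complex.I * (k:ℂ) * (R:ℂ) * ((Real.cos θ : ℝ) : ℂ))
    with hhdef
  set h' : ℝ → ℂ := fun θ => h θ * (Complex.I * (k:ℂ) * (R:ℂ) * ((-Real.sin θ : ℝ) : ℂ))
    with hh'def
  have hhderiv : ∀ θ : ℝ, HasDerivAt h (h' θ) θ := by
    intro θ
    have h1 : HasDerivAt (fun t : ℝ => ((Real.cos t : ℝ) : ℂ)) ((-Real.sin θ : ℝ) : ℂ) θ :=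
      (Real.hasDerivAt_cos θ).ofReal_comp
    have h2 := (h1.const_mul (Complex.I * (k:ℂ) * (R:ℂ))).cexp
    convert h2 using 1
  have hnormh : ∀ θ : ℝ, ‖h θ‖ = 1 := by
    intro θ
    rw [hhdef]
    simp [Complex.norm_exp]
  have hinth' : IntervalIntegrable h' MeasureTheory.volume (-π / 2 : ℝ) 0 := by
    apply Continuous.intervalIntegrable
    rw [hh'def]; fun_prop
  -- rewrite F R
  have hc0 : (Complex.I * (k:ℂ) * (R:ℂ)) ≠ 0 := by
    simp [Complex.ext_iff, hk.ne', hR0.ne']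
  have hFR : (∫ θ in (-π / 2 : ℝ)..0,
        ((Real.sin θ ^ 2 / (1 + Real.cos θ) : ℝ) : ℂ) *
          Complex.exp (-Complex.I * (k : ℂ) *
            ((d * Real.sin θ - x * Real.cos θ - y * Real.sin θ : ℝ) : ℂ)) *
          Complex.exp (Complex.I * (k : ℂ) * (R : ℂ) * ((Real.cos θ : ℝ) : ℂ)))
      = (-(Complex.I * (k:ℂ) * (R:ℂ)))⁻¹ * ∫ θ in (-π / 2 : ℝ)..0, g θ * h' θ := by
    rw [← intervalIntegral.integral_const_mul]
    apply intervalIntegral.integral_congr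
    intro θ _
    show _ = (-(Complex.I * (k:ℂ) * (R:ℂ)))⁻¹ * (g θ * h' θ)
    have hc0' : -(Complex.I * (k:ℂ) * (R:ℂ)) ≠ 0 := neg_ne_zero.mpr hc0
    apply mul_left_cancel₀ hc0'
    rw [mul_inv_cancel_left₀ hc0']
    rw [hgdef, hh'def, hhdef, hqdef, hEdef, hφdef]
    push_cast
    ring
  have ibp : (∫ θ in (-π / 2 : ℝ)..0, g θ * h' θ)
      = g 0 * h 0 - g (-π / 2) * h (-π / 2) - ∫ θ in (-π / 2 : ℝ)..0, g' θ * h θ :=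
    intervalIntegral.integral_mul_deriv_eq_deriv_mul hgderiv (fun θ _ => hhderiv θ) hintg' hinth'
  -- norm bounds
  have hg0 : g 0 = 0 := by simp [hgdef, hqdef]
  have hga : ‖g (-π / 2) * h (-π / 2)‖ ≤ 1 := by
    rw [norm_mul, hnormh, mul_one, hgdef, norm_mul, hnormE, mul_one, Complex.norm_real,
      Real.norm_eq_abs]
    exact habsq _ (hcosnn _ (Set.left_mem_uIcc))
  have hI2 : ‖∫ θ in (-π / 2 : ℝ)..0, g' θ * h θ‖ ≤ (1 + k * A) * (π / 2) := by
    have hb : ∀ θ ∈ Set.uIoc (-π / 2 : ℝ) 0, ‖g' θ * h θ‖ ≤ 1 + k * A := by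
      intro θ hθ
      rw [norm_mul, hnormh, mul_one]
      exact hg'bound θ (Set.uIoc_subset_uIcc hθ)
    have := intervalIntegral.norm_integral_le_of_norm_le_const hb
    have habs : |(0:ℝ) - (-π / 2)| = π / 2 := by
      have h0 : (0:ℝ) - (-π / 2) = π / 2 := by ring
      rw [h0, abs_of_pos (by linarith)]
    rw [habs] at this
    exact this
  have hnormint : ‖∫ θ in (-π / 2 : ℝ)..0, g θ * h' θ‖ ≤ B := by
    rw [ibp, hg0, zero_mul, zero_sub]
    calc ‖-(g (-π / 2) * h (-π / 2)) - ∫ θ in (-π / 2 : ℝ)..0, g' θ * h θ‖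
        ≤ ‖-(g (-π / 2) * h (-π / 2))‖ + ‖∫ θ in (-π / 2 : ℝ)..0, g' θ * h θ‖ := norm_sub_le _ _
      _ ≤ 1 + (1 + k * A) * (π / 2) := by
          rw [norm_neg]; exact add_le_add hga hI2
      _ = B := by rw [hB]
  -- put it together
  rw [hFR]
  have hninv : ‖(-(Complex.I * (k:ℂ) * (R:ℂ)))⁻¹‖ = (k * R)⁻¹ := by
    rw [norm_inv, norm_neg, norm_mul, norm_mul, Complex.norm_I, one_mul,
      Complex.norm_real, Complex.norm_real, Real.norm_eq_abs, Real.norm_eq_abs,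
      abs_of_pos hk, abs_of_pos hR0]
  rw [norm_mul, hninv]
  have hBnn : 0 ≤ B := by
    have h1 : (0:ℝ) ≤ k * A := by positivity
    have h2 : (0:ℝ) ≤ (1 + k * A) * (π / 2) :=
      mul_nonneg (by linarith) (by linarith)
    rw [hB]; linarith
  calc (k * R)⁻¹ * ‖∫ θ in (-π / 2 : ℝ)..0, g θ * h' θ‖
      ≤ (k * R)⁻¹ * B := by
        apply mul_le_mul_of_nonneg_left hnormint (by positivity)
    _ = B / k * R⁻¹ := by
        rw [mul_inv, div_eq_mul_inv]; ring
    _ = B / k * ‖R⁻¹‖ := by rw [Real.norm_eq_abs, abs_of_pos (by positivity)]
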